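/- Theorem (Convergence of quasi-minimizers of the Deep Ritz Method): In the Setting, assume Assumptions (A1) and (A3). Let (δ_n) be a sequence of non-negative reals converging to zero and let (x_n) be a sequence with F_n^f(x_n) ≤ inf_{z∈X} F_n^f(z) + δ_n for all n. Then (x_n) is norm-bounded in X and every weak accumulation point of (x_n) is a global minimizer of F^f. -/

import Mathlib

open Filter Topology
open scoped Classical

/-- Weak convergence of a sequence in a normed space: convergence tested against
every continuous linear functional. -/
def WeakTendsto {X : Type*} [NormedAddCommGroup X] [NormedSpace ℝ X]
    (u : ℕ → X) (x : X) : Prop :=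
  ∀ φ : X →L[ℝ] ℝ, Tendsto (fun n => φ (u n)) atTop (𝓝 (φ x))

/-- **Convergence of quasi-minimizers of the Deep Ritz Method.**
Under Assumptions (A1) and (A3), any sequence of `δ n`-quasi-minimizers of the
penalized functionals `(Fn n)` is norm-bounded, and every weak accumulation
point of it is a global minimizer of the limit functional `F`. -/
theorem deep_ritz_quasi_minimizers
    {X B : Type*} [NormedAddCommGroup X] [NormedSpace ℝ X] [CompleteSpace X]
    [NormedAddCommGroup B] [NormedSpace ℝ B] [CompleteSpace B]
    (hXrefl : Function.Surjective (NormedSpace.inclusionInDoubleDual ℝ X))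
    (hBrefl : Function.Surjective (NormedSpace.inclusionInDoubleDual ℝ B))
    (γ : X →L[ℝ] B)
    (E : X → ℝ)
    -- E is bounded from below
    (hEbdd : ∃ m : ℝ, ∀ x : X, m ≤ E x)
    -- E is (sequentially) lower semicontinuous w.r.t. the weak topology of X
    (hElsc : ∀ (x : X) (u : ℕ → X), WeakTendsto u x →
      ((E x : EReal)) ≤ liminf (fun n => ((E (u n) : EReal))) atTop)
    -- E is continuous w.r.t. the norm topology of X
    (hEcont : Continuous E)
    (p : ℝ) (hp : 1 < p)
    (f : X →L[ℝ] ℝ)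
    (lam : ℕ → ℝ) (hlam_pos : ∀ n, 0 < lam n) (hlam : Tendsto lam atTop atTop)
    (A : ℕ → Set X)
    -- the penalized functionals
    (Fn : ℕ → X → EReal)
    (hFn : ∀ (n : ℕ) (x : X), Fn n x =
      if x ∈ A n then ((E x + lam n * ‖γ x‖ ^ p - f x : ℝ) : EReal) else ⊤)
    -- the limit functional
    (F : X → EReal)
    (hF : ∀ x : X, F x = if γ x = 0 then ((E x - f x : ℝ) : EReal) else ⊤)
    -- Assumption (A1)
    (hA1 : ∀ x : X, γ x = 0 → ∃ u : ℕ → X, (∀ n, u n ∈ A n) ∧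
      Tendsto u atTop (𝓝 x) ∧
      Tendsto (fun n => lam n * ‖γ (u n)‖ ^ p) atTop (𝓝 0))
    -- Assumption (A3): equi-coercivity
    (hA3 : ∀ r : ℝ, ∃ C : ℝ, ∀ (n : ℕ) (x : X), Fn n x ≤ (r : EReal) → ‖x‖ ≤ C)
    -- quasi-minimizers
    (x : ℕ → X) (δ : ℕ → ℝ) (hδ0 : ∀ n, 0 ≤ δ n) (hδ : Tendsto δ atTop (𝓝 0))
    (hqm : ∀ n, Fn n (x n) ≤ (⨅ z : X, Fn n z) + (δ n : EReal)) :
    (∃ C : ℝ, ∀ n, ‖x n‖ ≤ C) ∧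
      ∀ x' : X, (∃ φ : ℕ → ℕ, StrictMono φ ∧ WeakTendsto (x ∘ φ) x') →
        ∀ z : X, F x' ≤ F z := by

  obtain ⟨m, hm⟩ := hEbdd
  -- recovery sequence at 0
  obtain ⟨u0, hu0A, hu0tend, hu0pen⟩ := hA1 0 (by simp)
  set h0 : ℕ → ℝ := fun n => E (u0 n) + lam n * ‖γ (u0 n)‖ ^ p - f (u0 n) with hh0def
  have hh0 : Tendsto h0 atTop (𝓝 (E 0 + 0 - f 0)) :=
    (((hEcont.tendsto 0).comp hu0tend).add hu0pen).sub ((f.continuous.tendsto 0).comp hu0tend)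
  -- key upper bound on Fn n (x n) via a recovery sequence
  have key : ∀ (u : ℕ → X), (∀ n, u n ∈ A n) → ∀ n,
      Fn n (x n) ≤ ((E (u n) + lam n * ‖γ (u n)‖ ^ p - f (u n) + δ n : ℝ) : EReal) := by
    intro u hu n
    calc Fn n (x n) ≤ (⨅ z : X, Fn n z) + (δ n : EReal) := hqm n
      _ ≤ Fn n (u n) + (δ n : EReal) := add_le_add (iInf_le _ _) le_rfl
      _ = ((E (u n) + lam n * ‖γ (u n)‖ ^ p - f (u n) + δ n : ℝ) : EReal) := by
          rw [hFn n (u n), if_pos (hu n), ← EReal.coe_add]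
  have hmemA : ∀ n, x n ∈ A n := by
    intro n
    by_contra h
    have h1 := key u0 hu0A n
    rw [hFn n (x n), if_neg h] at h1
    exact (EReal.coe_lt_top _).not_ge h1
  have hg : ∀ (u : ℕ → X), (∀ n, u n ∈ A n) → ∀ n,
      E (x n) + lam n * ‖γ (x n)‖ ^ p - f (x n)
        ≤ E (u n) + lam n * ‖γ (u n)‖ ^ p - f (u n) + δ n := by
    intro u hu n
    have h1 := key u hu n
    rw [hFn n (x n), if_pos (hmemA n)] at h1
    exact_mod_cast h1
  -- bound on h0 n + δ n
  have hconv : Tendsto (fun n => h0 n + δ n) atTop (𝓝 (E 0 + 0 - f 0 + 0)) := hh0.add hδ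
  obtain ⟨r, hr⟩ := hconv.bddAbove_range
  have hr' : ∀ n, h0 n + δ n ≤ r := fun n => hr (Set.mem_range_self n)
  -- boundedness from equi-coercivity
  obtain ⟨C, hC⟩ := hA3 r
  have hbdd : ∀ n, ‖x n‖ ≤ C := by
    intro n
    refine hC n (x n) ?_
    refine (key u0 hu0A n).trans ?_
    exact_mod_cast hr' n
  refine ⟨⟨C, hbdd⟩, ?_⟩
  rintro x' ⟨φ, hφ, hweak⟩ z
  rw [hF z]
  by_cases hz : γ z = 0
  swap
  · rw [if_neg hz]; exact le_top
  rw [if_pos hz]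
  -- penalty term is bounded
  have hpen_bdd : ∀ n, lam n * ‖γ (x n)‖ ^ p ≤ r - m + ‖f‖ * C := by
    intro n
    have h1 := hg u0 hu0A n
    have h2 : f (x n) ≤ ‖f‖ * C := by
      calc f (x n) ≤ |f (x n)| := le_abs_self _
        _ = ‖f (x n)‖ := rfl
        _ ≤ ‖f‖ * ‖x n‖ := f.le_opNorm _
        _ ≤ ‖f‖ * C := mul_le_mul_of_nonneg_left (hbdd n) (norm_nonneg f)
    have h3 := hm (x n)
    have h4 := hr' n
    simp only [hh0def] at h1 h4
    nlinarith [h1, h2, h3, h4]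
  -- γ (x (φ n)) → 0 in norm
  have hlamφ : Tendsto (fun n => lam (φ n)) atTop atTop := hlam.comp hφ.tendsto_atTop
  have hpow : Tendsto (fun n => ‖γ (x (φ n))‖ ^ p) atTop (𝓝 0) := by
    have hub : ∀ n, ‖γ (x (φ n))‖ ^ p ≤ (r - m + ‖f‖ * C) / lam (φ n) := by
      intro n
      rw [le_div_iff₀ (hlam_pos (φ n))]
      have := hpen_bdd (φ n)
      linarith [this]
    have hdiv : Tendsto (fun n => (r - m + ‖f‖ * C) / lam (φ n)) atTop (𝓝 0) :=
      Tendsto.div_atTop tendsto_const_nhds hlamφ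
    exact squeeze_zero (fun n => Real.rpow_nonneg (norm_nonneg _) p) hub hdiv
  have hp0 : p ≠ 0 := by positivity
  have hγ0 : Tendsto (fun n => ‖γ (x (φ n))‖) atTop (𝓝 0) := by
    have hc : ContinuousAt (fun t : ℝ => t ^ p⁻¹) 0 :=
      (Real.continuousAt_rpow_const 0 p⁻¹ (Or.inr (by positivity)))
    have := hc.tendsto.comp hpow
    rw [Real.zero_rpow (by positivity : p⁻¹ ≠ 0)] at this
    convert this using 2 with n
    simp only [Function.comp]
    rw [Real.rpow_rpow_inv (norm_nonneg _) hp0]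
  have hγ0' : Tendsto (fun n => γ (x (φ n))) atTop (𝓝 0) :=
    tendsto_zero_iff_norm_tendsto_zero.mpr hγ0
  -- γ x' = 0
  have hγx' : γ x' = 0 := by
    apply NormedSpace.eq_zero_of_forall_dual_eq_zero ℝ
    intro ψ
    have h1 : Tendsto (fun n => ψ (γ (x (φ n)))) atTop (𝓝 0) := by
      have := (ψ.continuous.tendsto 0).comp hγ0'
      simpa [Function.comp_def] using this
    have h2 : Tendsto (fun n => ψ (γ (x (φ n)))) atTop (𝓝 (ψ (γ x'))) := by
      have := hweak (ψ.comp γ)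
      simpa [Function.comp] using this
    exact tendsto_nhds_unique h2 h1
  rw [hF x', if_pos hγx']
  -- recovery sequence at z
  obtain ⟨uz, huzA, huztend, huzpen⟩ := hA1 z hz
  set w : ℕ → ℝ := fun n =>
    E (uz (φ n)) + lam (φ n) * ‖γ (uz (φ n))‖ ^ p - f (uz (φ n)) + δ (φ n) + f (x (φ n))
    with hwdef
  have hEle : ∀ n, E (x (φ n)) ≤ w n := by
    intro n
    have h1 := hg uz huzA (φ n)
    have h2 : 0 ≤ lam (φ n) * ‖γ (x (φ n))‖ ^ p :=
      mul_nonneg (hlam_pos (φ n)).le (Real.rpow_nonneg (norm_nonneg _) p)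
    simp only [hwdef]
    linarith
  have hw : Tendsto w atTop (𝓝 (E z + 0 - f z + 0 + f x')) := by
    refine Tendsto.add (Tendsto.add ?_ (hδ.comp hφ.tendsto_atTop)) (hweak f)
    exact ((((hEcont.tendsto z).comp huztend).add huzpen).sub
      ((f.continuous.tendsto z).comp huztend)).comp hφ.tendsto_atTop
  -- final EReal chain
  have hliminf : liminf (fun n => ((E (x (φ n)) : EReal))) atTop
      ≤ ((E z + 0 - f z + 0 + f x' : ℝ) : EReal) := by
    have h1 : liminf (fun n => ((E (x (φ n)) : EReal))) atTop
        ≤ liminf (fun n => ((w n : EReal))) atTop := by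
      refine liminf_le_liminf (Eventually.of_forall fun n => ?_)
      exact_mod_cast hEle n
    have h2 : Tendsto (fun n => ((w n : EReal))) atTop
        (𝓝 ((E z + 0 - f z + 0 + f x' : ℝ) : EReal)) :=
      (continuous_coe_real_ereal.tendsto _).comp hw
    rw [h2.liminf_eq] at h1
    exact h1
  have hfinal : (E x' : EReal) ≤ ((E z + 0 - f z + 0 + f x' : ℝ) : EReal) :=
    (hElsc x' (x ∘ φ) hweak).trans hliminf
  have hfinal' : E x' ≤ E z + 0 - f z + 0 + f x' := by exact_mod_cast hfinal
  apply EReal.coe_le_coe_iff.mpr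
  linarith
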